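/- The entropy of a product with a Euclidean factor equals the entropy of the factor: let k, m be natural numbers, let ν be a σ-finite Borel measure on a finite-dimensional Euclidean space E₁, and let vol_m denote Lebesgue measure on ℝ^m. Then λ^{(k+m)}(ν ⊗ vol_m) = λ^{(k)}(ν), where the left-hand entropy is the supremum of F^{(k+m)}_{x₀,t₀}(ν ⊗ vol_m) over x₀ ∈ E₁ × ℝ^m and t₀ > 0, and the right-hand entropy is the supremum of F^{(k)}_{a,t₀}(ν) over a ∈ E₁ and t₀ > 0. -/

import Mathlib

open MeasureTheory Real ENNReal

/-- The `F`-functional with dimension parameter `n` of a Borel measure `μ` on a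
finite-dimensional Euclidean space `E`:
`F^{(n)}_{x₀,t₀}(μ) = (4π t₀)^{-n/2} ∫_E exp(-‖x-x₀‖²/(4t₀)) dμ(x)`. -/
noncomputable def Fmeas (n : ℕ) {E : Type*} [NormedAddCommGroup E] [InnerProductSpace ℝ E]
    [MeasurableSpace E] (μ : Measure E) (x₀ : E) (t₀ : ℝ) : ℝ≥0∞ :=
  ENNReal.ofReal ((4 * Real.pi * t₀) ^ (-(n : ℝ) / 2)) *
    ∫⁻ x, ENNReal.ofReal (Real.exp (-‖x - x₀‖ ^ 2 / (4 * t₀))) ∂μ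

/-- The entropy `λ^{(n)}(μ) = sup { F^{(n)}_{x₀,t₀}(μ) : x₀ ∈ E, t₀ > 0 }`. -/
noncomputable def entropyMeas (n : ℕ) {E : Type*} [NormedAddCommGroup E]
    [InnerProductSpace ℝ E] [MeasurableSpace E] (μ : Measure E) : ℝ≥0∞ :=
  ⨆ (x₀ : E) (t₀ : ℝ) (_ : 0 < t₀), Fmeas n μ x₀ t₀

variable {E₁ : Type*} [NormedAddCommGroup E₁] [InnerProductSpace ℝ E₁]
  [FiniteDimensional ℝ E₁] [MeasurableSpace E₁] [BorelSpace E₁]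

/-- The Euclidean product `E₁ × ℝ^m`: the product equipped with the `ℓ²`-product norm,
so that `‖(z,x)‖² = ‖z‖² + ‖x‖²`. -/
abbrev EuclideanProd (E₁ : Type*) [NormedAddCommGroup E₁] [InnerProductSpace ℝ E₁] (m : ℕ) :=
  WithLp 2 (E₁ × EuclideanSpace ℝ (Fin m))

/-- As a measurable space, the Euclidean product `E₁ × ℝ^m` is just the product of the
measurable spaces of the factors. -/
noncomputable instance (m : ℕ) : MeasurableSpace (EuclideanProd E₁ m) :=
  (inferInstance : MeasurableSpace (E₁ × EuclideanSpace ℝ (Fin m))).comap (WithLp.ofLp (p := 2))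

lemma gauss_lintegral {V : Type*} [NormedAddCommGroup V] [InnerProductSpace ℝ V]
    [FiniteDimensional ℝ V] [MeasurableSpace V] [BorelSpace V] {t : ℝ} (ht : 0 < t) (b : V) :
    ∫⁻ x, ENNReal.ofReal (rexp (-‖x - b‖ ^ 2 / (4 * t))) ∂(volume : Measure V)
      = ENNReal.ofReal ((4 * Real.pi * t) ^ ((Module.finrank ℝ V : ℝ) / 2)) := by
  have h4t : (0:ℝ) < (4 * t)⁻¹ := by positivity
  have h1 : ∀ v : V, rexp (-‖v‖ ^ 2 / (4 * t)) = rexp (-(4*t)⁻¹ * ‖v‖ ^ 2) := by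
    intro v; congr 1; field_simp
  have h2 : ∫⁻ x, ENNReal.ofReal (rexp (-‖x - b‖ ^ 2 / (4 * t))) ∂(volume : Measure V)
      = ∫⁻ x, ENNReal.ofReal (rexp (-(4*t)⁻¹ * ‖x‖ ^ 2)) ∂(volume : Measure V) := by
    simp_rw [h1, sub_eq_add_neg]
    exact lintegral_add_right_eq_self (fun x => ENNReal.ofReal (rexp (-(4*t)⁻¹ * ‖x‖ ^ 2))) (-b)
  rw [h2]
  have hint : Integrable (fun v : V => rexp (-(4*t)⁻¹ * ‖v‖ ^ 2)) := by
    have := (GaussianFourier.integrable_cexp_neg_mul_sq_norm_add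
      (b := ((4*t)⁻¹ : ℂ)) (by simpa using h4t) 0 (0 : V)).re
    refine this.congr (Filter.Eventually.of_forall fun v => ?_)
    simp only
    rw [show (-(4*(t:ℂ))⁻¹ * (‖v‖:ℂ)^2 + 0 * ((inner ℝ (0:V) v : ℝ) : ℂ))
      = ((-(4*t)⁻¹*‖v‖^2 : ℝ) : ℂ) by push_cast; ring]
    exact Complex.exp_ofReal_re _
  rw [← ofReal_integral_eq_lintegral_ofReal hint
    (Filter.Eventually.of_forall fun v => (Real.exp_pos _).le)]
  rw [GaussianFourier.integral_rexp_neg_mul_sq_norm h4t,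
    show Real.pi / (4*t)⁻¹ = 4*Real.pi*t by field_simp]

lemma Fmeas_prod (k m : ℕ) (ν : Measure E₁) [SigmaFinite ν]
    (x₀ : EuclideanProd E₁ m) {t : ℝ} (ht : 0 < t) :
    @Fmeas (k + m) (EuclideanProd E₁ m) _ _ _
        ((ν.prod (volume : Measure (EuclideanSpace ℝ (Fin m)))).map (WithLp.toLp 2)) x₀ t
      = Fmeas k ν x₀.ofLp.1 t := by
  have h4 : (0:ℝ) < 4 * Real.pi * t := by positivity
  have hsplit : ∀ p : E₁ × EuclideanSpace ℝ (Fin m),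
      ENNReal.ofReal (rexp (-‖WithLp.toLp 2 p - x₀‖ ^ 2 / (4 * t)))
        = ENNReal.ofReal (rexp (-‖p.1 - x₀.ofLp.1‖ ^ 2 / (4 * t)))
          * ENNReal.ofReal (rexp (-‖p.2 - x₀.ofLp.2‖ ^ 2 / (4 * t))) := by
    intro p
    rw [← ENNReal.ofReal_mul (Real.exp_pos _).le, ← Real.exp_add]
    congr 2
    rw [WithLp.prod_norm_sq_eq_of_L2]
    show -(‖p.1 - x₀.ofLp.1‖ ^ 2 + ‖p.2 - x₀.ofLp.2‖ ^ 2) / (4 * t) = _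
    ring
  have mf : AEMeasurable (fun z : E₁ => ENNReal.ofReal (rexp (-‖z - x₀.ofLp.1‖ ^ 2 / (4 * t)))) ν := by
    fun_prop
  have mg : AEMeasurable (fun x : EuclideanSpace ℝ (Fin m) =>
      ENNReal.ofReal (rexp (-‖x - x₀.ofLp.2‖ ^ 2 / (4 * t))))
      (volume : Measure (EuclideanSpace ℝ (Fin m))) := by fun_prop
  have key : (∫⁻ p : EuclideanProd E₁ m, ENNReal.ofReal (rexp (-‖p - x₀‖ ^ 2 / (4 * t)))
        ∂((ν.prod (volume : Measure (EuclideanSpace ℝ (Fin m)))).map (WithLp.toLp 2)))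
      = (∫⁻ z, ENNReal.ofReal (rexp (-‖z - x₀.ofLp.1‖ ^ 2 / (4 * t))) ∂ν) *
          ∫⁻ x, ENNReal.ofReal (rexp (-‖x - x₀.ofLp.2‖ ^ 2 / (4 * t)))
            ∂(volume : Measure (EuclideanSpace ℝ (Fin m))) :=
    by
    let e : (E₁ × EuclideanSpace ℝ (Fin m)) ≃ᵐ EuclideanProd E₁ m :=
      { toEquiv := (WithLp.equiv 2 (E₁ × EuclideanSpace ℝ (Fin m))).symm
        measurable_toFun := by rintro s ⟨u, hu, rfl⟩; exact hu
        measurable_invFun := Measurable.of_comap_le le_rfl }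
    rw [show ((ν.prod (volume : Measure (EuclideanSpace ℝ (Fin m)))).map (WithLp.toLp 2)
        : Measure (EuclideanProd E₁ m)) = (ν.prod volume).map e from rfl, lintegral_map_equiv]
    exact (lintegral_congr hsplit).trans (lintegral_prod_mul mf mg)
  unfold Fmeas
  rw [key, gauss_lintegral ht x₀.ofLp.2, finrank_euclideanSpace_fin,
    mul_comm (∫⁻ z, ENNReal.ofReal (rexp (-‖z - x₀.ofLp.1‖ ^ 2 / (4 * t))) ∂ν) _, ← mul_assoc,
    ← ENNReal.ofReal_mul (by positivity), ← Real.rpow_add h4]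
  congr 2
  push_cast
  ring_nf

/-- The entropy of a product with a Euclidean factor equals the entropy of the factor:
`λ^{(k+m)}(ν ⊗ vol_m) = λ^{(k)}(ν)`. -/
theorem entropy_product (k m : ℕ) (ν : Measure E₁) [SigmaFinite ν] :
    @entropyMeas (k + m) (EuclideanProd E₁ m) _ _ _
        ((ν.prod (volume : Measure (EuclideanSpace ℝ (Fin m)))).map (WithLp.toLp 2)) =
      entropyMeas k ν := by
  apply le_antisymm
  · refine iSup_le fun x₀ => iSup_le fun t => iSup_le fun ht => ?_
    rw [Fmeas_prod k m ν x₀ ht]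
    exact le_iSup_of_le x₀.ofLp.1 (le_iSup_of_le t (le_iSup_of_le ht le_rfl))
  · refine iSup_le fun a => iSup_le fun t => iSup_le fun ht => ?_
    refine le_iSup_of_le (WithLp.toLp 2 (a, (0 : EuclideanSpace ℝ (Fin m))) : EuclideanProd E₁ m)
      (le_iSup_of_le t (le_iSup_of_le ht ?_))
    exact (Fmeas_prod k m ν (WithLp.toLp 2 (a, (0 : EuclideanSpace ℝ (Fin m))) : EuclideanProd E₁ m) ht).ge
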